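/- Let a, b, p, q be real numbers with b > q ≥ 0, and set b' = √(b² − q²). Then there exists a linear automorphism φ of ℝ⁶ such that φ(β_{a,b,p,q}(x, y)) = β_{a,b',p,0}(φ(x), φ(y)) for all x, y ∈ ℝ⁶; that is, the 2-step nilpotent Lie algebras (ℝ⁶, β_{a,b,p,q}) and (ℝ⁶, β_{a,b',p,0}) are isomorphic. -/

import Mathlib

/-- The 2-step nilpotent bracket `β_{a,b,p,q}` on `ℝ⁶`, with
`β(e₁,e₂) = (a+p)e₅`, `β(e₃,e₄) = (a−p)e₅`, `β(e₁,e₃) = (b+q)e₆`, `β(e₂,e₄) = −(b−q)e₆`. -/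
noncomputable def betaBr (a b p q : ℝ) (x y : Fin 6 → ℝ) : Fin 6 → ℝ :=
  ((a + p) * (x 0 * y 1 - x 1 * y 0) + (a - p) * (x 2 * y 3 - x 3 * y 2)) •
    (Pi.single 4 1 : Fin 6 → ℝ) +
  ((b + q) * (x 0 * y 2 - x 2 * y 0) - (b - q) * (x 1 * y 3 - x 3 * y 1)) •
    (Pi.single 5 1 : Fin 6 → ℝ)

/-- for `b > q ≥ 0` and `b' = √(b² − q²)`, the Lie algebras
`(ℝ⁶, β_{a,b,p,q})` and `(ℝ⁶, β_{a,b',p,0})` are isomorphic. -/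
theorem beta_iso_q_zero (a b p q : ℝ) (hq : 0 ≤ q) (hb : q < b) :
    ∃ φ : (Fin 6 → ℝ) ≃ₗ[ℝ] (Fin 6 → ℝ),
      ∀ x y : Fin 6 → ℝ,
        φ (betaBr a b p q x y) = betaBr a (Real.sqrt (b ^ 2 - q ^ 2)) p 0 (φ x) (φ y) := by
  set B := Real.sqrt (b ^ 2 - q ^ 2) with hBdef
  have hb2 : (0:ℝ) < b ^ 2 - q ^ 2 := by nlinarith
  have hBpos : 0 < B := Real.sqrt_pos.mpr hb2
  have hB2 : B ^ 2 = b ^ 2 - q ^ 2 := Real.sq_sqrt hb2.le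
  set r := Real.sqrt ((b + q) / B) with hrdef
  set s := Real.sqrt ((b - q) / B) with hsdef
  have hbq : (0:ℝ) < b + q := by linarith
  have hbq' : (0:ℝ) < b - q := by linarith
  have hr2 : r ^ 2 = (b + q) / B := Real.sq_sqrt (by positivity)
  have hs2 : s ^ 2 = (b - q) / B := Real.sq_sqrt (by positivity)
  have hrpos : 0 < r := Real.sqrt_pos.mpr (by positivity)
  have hspos : 0 < s := Real.sqrt_pos.mpr (by positivity)
  have hrs : r * s = 1 := by
    rw [hrdef, hsdef, ← Real.sqrt_mul (by positivity)]
    rw [show (b + q) / B * ((b - q) / B) = (b ^ 2 - q ^ 2) / B ^ 2 by ring, ← hB2,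
      div_self (by positivity), Real.sqrt_one]
  have hBr2 : B * r ^ 2 = b + q := by rw [hr2]; field_simp
  have hBs2 : B * s ^ 2 = b - q := by rw [hs2]; field_simp
  set c : Fin 6 → ℝ := fun i =>
    if i.val = 0 ∨ i.val = 2 then r else if i.val = 1 ∨ i.val = 3 then s else 1 with hc
  have hc0 : c 0 = r := by norm_num [hc]
  have hc1 : c 1 = s := by norm_num [hc]
  have hc2 : c 2 = r := by norm_num [hc]
  have hc3 : c 3 = s := by rw [hc]; exact (if_neg (by decide)).trans (if_pos (by decide))
  have hc45 : ∀ i : Fin 6, i.val = 4 ∨ i.val = 5 → c i = 1 := by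
    rintro i (h | h) <;> simp [hc, h] <;> rintro rfl <;> simp at h
  have hcne : ∀ i, c i ≠ 0 := by
    intro i
    simp only [hc]
    split_ifs <;> positivity
  set φ : (Fin 6 → ℝ) ≃ₗ[ℝ] (Fin 6 → ℝ) :=
    LinearEquiv.piCongrRight fun i => LinearEquiv.smulOfNeZero ℝ ℝ (c i) (hcne i) with hφdef
  have hφ : ∀ (z : Fin 6 → ℝ) (i : Fin 6), φ z i = c i * z i := fun z i => rfl
  have hsingle : ∀ j : Fin 6, j.val = 4 ∨ j.val = 5 →
      φ (Pi.single j 1) = Pi.single j 1 := by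
    intro j hj
    funext i
    rw [hφ]
    rcases eq_or_ne i j with h | h
    · subst h; rw [Pi.single_eq_same, hc45 i hj, mul_one]
    · rw [Pi.single_eq_of_ne h, mul_zero]
  refine ⟨φ, ?_⟩
  intro x y
  rw [betaBr, map_add, map_smul, map_smul, hsingle 4 (Or.inl rfl), hsingle 5 (Or.inr rfl)]
  rw [betaBr]
  congr 2
  · simp only [hφ, smul_eq_mul, hc0, hc1, hc2, hc3]
    linear_combination (-((a + p) * (x 0 * y 1 - x 1 * y 0) +
      (a - p) * (x 2 * y 3 - x 3 * y 2))) * hrs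
  · simp only [hφ, smul_eq_mul, hc0, hc1, hc2, hc3]
    linear_combination (-(x 0 * y 2 - x 2 * y 0)) * hBr2 + (x 1 * y 3 - x 3 * y 1) * hBs2
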